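/- Let Θ be a measurable space with a probability measure (prior) ξ, let I be a nonempty finite index set, let X_i be nonempty sets with X = Π_{i∈I} X_i and pseudometrics ρ_i on X_i. For each θ ∈ Θ and i ∈ I let p_{θ,i} : X → (0,∞) be such that θ ↦ p_{θ,i}(x) is measurable for each x, and suppose there are constants L_i ≥ 0 such that for every θ ∈ Θ and all x, y ∈ X, |ln p_{θ,i}(x) − ln p_{θ,i}(y)| ≤ L_i · ρ_i(x_i, y_i). Define the joint likelihood p_θ(x) = Π_{i∈I} p_{θ,i}(x), assume 0 < ∫_Θ p_θ(x) dξ(θ) < ∞ for all x ∈ X, and define the posterior ξ(B | x) = ∫_B p_θ(x) dξ(θ) / ∫_Θ p_θ(x) dξ(θ) for measurable B ⊆ Θ. Then for all measurable B ⊆ Θ and all x, y ∈ X, ξ(B | x) ≤ exp( 2·(max_{i∈I} L_i)·ρ(x,y) ) · ξ(B | y), where ρ(x,y) = Σ_{i∈I} ρ_i(x_i, y_i); i.e. the posterior is (2·max_i L_i, 0)-differentially private under the pseudometric ρ. -/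

import Mathlib

open MeasureTheory Finset

/-- Posterior sampling for a Lipschitz Bayesian network is differentially private:
if each conditional likelihood satisfies `|ln p_{θ,i}(x) − ln p_{θ,i}(y)| ≤
L_i·ρ_i(x_i,y_i)`, the joint likelihood is `p_θ(x) = Π_i p_{θ,i}(x)`, and the
posterior is `ξ(B|x) = ∫_B p_θ(x)dξ / ∫_Θ p_θ(x)dξ`, then for all measurable `B`
and all `x, y`, `ξ(B|x) ≤ exp(2·(max_i L_i)·ρ(x,y))·ξ(B|y)`, where
`ρ(x,y) = Σ_i ρ_i(x_i,y_i)`. -/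
theorem stmt_15 {Θ : Type*} [MeasurableSpace Θ] (ξ : Measure Θ)
    [IsProbabilityMeasure ξ] {I : Type*} [Fintype I] [Nonempty I]
    {X : I → Type*} [∀ i, Nonempty (X i)] [∀ i, PseudoMetricSpace (X i)]
    (p : Θ → I → (∀ i, X i) → ℝ) (hpos : ∀ θ i x, 0 < p θ i x)
    (hmeas : ∀ (i : I) (x : ∀ i, X i), Measurable fun θ => p θ i x)
    (L : I → ℝ) (hL : ∀ i, 0 ≤ L i)
    (hlip : ∀ (θ : Θ) (i : I) (x y : ∀ i, X i),
      |Real.log (p θ i x) - Real.log (p θ i y)| ≤ L i * dist (x i) (y i))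
    (hint : ∀ x : ∀ i, X i,
      0 < ∫⁻ θ, ENNReal.ofReal (∏ i, p θ i x) ∂ξ ∧
      ∫⁻ θ, ENNReal.ofReal (∏ i, p θ i x) ∂ξ < ⊤)
    (B : Set Θ) (hB : MeasurableSet B) (x y : ∀ i, X i) :
    (∫⁻ θ in B, ENNReal.ofReal (∏ i, p θ i x) ∂ξ) /
        (∫⁻ θ, ENNReal.ofReal (∏ i, p θ i x) ∂ξ) ≤
      ENNReal.ofReal
          (Real.exp (2 * (Finset.univ.sup' Finset.univ_nonempty L) *
            ∑ i, dist (x i) (y i))) *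
        ((∫⁻ θ in B, ENNReal.ofReal (∏ i, p θ i y) ∂ξ) /
          (∫⁻ θ, ENNReal.ofReal (∏ i, p θ i y) ∂ξ)) := by

  set M := Finset.univ.sup' Finset.univ_nonempty L with hM
  have hM0 : 0 ≤ M := le_trans (hL (Classical.arbitrary I))
    (Finset.le_sup' L (Finset.mem_univ _))
  set S := ∑ i, dist (x i) (y i) with hS
  have hS0 : 0 ≤ S := Finset.sum_nonneg fun i _ => dist_nonneg
  set c := M * S with hc
  have hc0 : 0 ≤ c := mul_nonneg hM0 hS0
  -- pointwise bound both directions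
  have key : ∀ (u v : ∀ i, X i), (∀ i, dist (u i) (v i) = dist (x i) (y i)) →
      ∀ θ : Θ, ∏ i, p θ i u ≤ Real.exp c * ∏ i, p θ i v := by
    intro u v hd θ
    have hu : (0:ℝ) < ∏ i, p θ i u := Finset.prod_pos fun i _ => hpos θ i u
    have hv : (0:ℝ) < ∏ i, p θ i v := Finset.prod_pos fun i _ => hpos θ i v
    have hlog : Real.log (∏ i, p θ i u) - Real.log (∏ i, p θ i v) ≤ c := by
      rw [Real.log_prod (fun i _ => (hpos θ i u).ne'),
          Real.log_prod (fun i _ => (hpos θ i v).ne'),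
          ← Finset.sum_sub_distrib]
      calc ∑ i, (Real.log (p θ i u) - Real.log (p θ i v))
          ≤ ∑ i, M * dist (x i) (y i) := by
            apply Finset.sum_le_sum
            intro i _
            have h1 := le_abs_self (Real.log (p θ i u) - Real.log (p θ i v))
            have h2 := hlip θ i u v
            have h3 : L i ≤ M := Finset.le_sup' L (Finset.mem_univ i)
            have h4 : L i * dist (u i) (v i) ≤ M * dist (x i) (y i) := by
              rw [hd i]; exact mul_le_mul_of_nonneg_right h3 dist_nonneg
            linarith
        _ = c := by rw [hc, hS, Finset.mul_sum]
    calc ∏ i, p θ i u = Real.exp (Real.log (∏ i, p θ i u)) := (Real.exp_log hu).symm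
      _ ≤ Real.exp (c + Real.log (∏ i, p θ i v)) := by
          apply Real.exp_le_exp.2; linarith
      _ = Real.exp c * ∏ i, p θ i v := by rw [Real.exp_add, Real.exp_log hv]
  set k : ENNReal := ENNReal.ofReal (Real.exp c) with hk
  have hkt : k ≠ ⊤ := ENNReal.ofReal_ne_top
  have lint : ∀ (u v : ∀ i, X i), (∀ i, dist (u i) (v i) = dist (x i) (y i)) →
      ∀ μ : MeasureTheory.Measure Θ,
      (∫⁻ θ, ENNReal.ofReal (∏ i, p θ i u) ∂μ) ≤
        k * ∫⁻ θ, ENNReal.ofReal (∏ i, p θ i v) ∂μ := by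
    intro u v hd μ
    rw [← MeasureTheory.lintegral_const_mul' _ _ hkt]
    apply MeasureTheory.lintegral_mono
    intro θ
    dsimp only
    rw [hk, ← ENNReal.ofReal_mul (Real.exp_nonneg c)]
    exact ENNReal.ofReal_le_ofReal (key u v hd θ)
  set Nx := ∫⁻ θ in B, ENNReal.ofReal (∏ i, p θ i x) ∂ξ with hNx
  set Dx := ∫⁻ θ, ENNReal.ofReal (∏ i, p θ i x) ∂ξ with hDx
  set Ny := ∫⁻ θ in B, ENNReal.ofReal (∏ i, p θ i y) ∂ξ with hNy
  set Dy := ∫⁻ θ, ENNReal.ofReal (∏ i, p θ i y) ∂ξ with hDy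
  have hxy : ∀ i, dist (x i) (y i) = dist (x i) (y i) := fun i => rfl
  have hyx : ∀ i, dist (y i) (x i) = dist (x i) (y i) := fun i => dist_comm _ _
  have hNle : Nx ≤ k * Ny := lint x y hxy _
  have hDle : Dy ≤ k * Dx := lint y x hyx _
  have hDx0 : Dx ≠ 0 := (hint x).1.ne'
  have hDxt : Dx ≠ ⊤ := (hint x).2.ne
  have hDy0 : Dy ≠ 0 := (hint y).1.ne'
  have hDyt : Dy ≠ ⊤ := (hint y).2.ne
  have hexp2 : ENNReal.ofReal (Real.exp (2 * M * S)) = k * k := by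
    rw [hk, ← ENNReal.ofReal_mul (Real.exp_nonneg c), ← Real.exp_add, hc]
    ring_nf
  rw [hexp2, ENNReal.div_le_iff hDx0 hDxt]
  calc Nx ≤ k * Ny := hNle
    _ = k * (Ny / Dy * Dy) := by rw [ENNReal.div_mul_cancel hDy0 hDyt]
    _ ≤ k * (Ny / Dy * (k * Dx)) := by
        gcongr
    _ = k * k * (Ny / Dy) * Dx := by ring
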